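/- Let P_n (n >= 2) be a path graph and let S_P be a burning sequence defining a burning homomorphism of P_n with end time T. Then ceil((sqrt(4n - 3) - 1)/2) + 1 <= T <= ceil(n/3) + 1, and both bounds are attained. -/

import Mathlib

open SimpleGraph

/-- The `j`-th burned set `𝒩_j`: vertices within distance `j - k` of source `v_k` (`1 ≤ k ≤ j`). -/
def burnN {V : Type*} (G : SimpleGraph V) (s : ℕ → V) (n j : ℕ) : Set V :=
  {w | ∃ k, 1 ≤ k ∧ k ≤ n ∧ k ≤ j ∧ G.Reachable (s k) w ∧ G.dist (s k) w ≤ j - k}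

/-- The set `U_j`: vertices within distance `j - k` of source `v_k` for `1 ≤ k ≤ j - 1`. -/
def burnU {V : Type*} (G : SimpleGraph V) (s : ℕ → V) (n j : ℕ) : Set V :=
  {w | ∃ k, 1 ≤ k ∧ k ≤ n ∧ k + 1 ≤ j ∧ G.Reachable (s k) w ∧ G.dist (s k) w ≤ j - k}

/-- `(s 1, …, s n)` is a burning sequence: `v_j ∉ U_j` for `2 ≤ j ≤ n`, and `U_{n+1} = G`. -/
def IsBurningSeq {V : Type*} (G : SimpleGraph V) (s : ℕ → V) (n : ℕ) : Prop :=
  1 ≤ n ∧ (∀ j, 2 ≤ j → j ≤ n → s j ∉ burnU G s n j) ∧ ∀ w, w ∈ burnU G s n (n + 1)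

/-- The burning map `λ(w) = min { j | w ∈ 𝒩_j }`. -/
noncomputable def burnTime {V : Type*} (G : SimpleGraph V) (s : ℕ → V) (n : ℕ) (w : V) : ℕ :=
  sInf {j | w ∈ burnN G s n j}

/-- The end time `𝐓 = max_w λ(w)` of the burning. -/
noncomputable def endTime {V : Type*} [Fintype V] (G : SimpleGraph V) (s : ℕ → V) (n : ℕ) : ℕ :=
  Finset.univ.sup (burnTime G s n)

/-- A burning whose burning map is a homomorphism: `|λ(v) - λ(w)| = 1` on every edge. -/
def IsBurningHom {V : Type*} (G : SimpleGraph V) (s : ℕ → V) (n : ℕ) : Prop :=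
  IsBurningSeq G s n ∧
    ∀ v w, G.Adj v w →
      ((burnTime G s n v : ℤ) - burnTime G s n w).natAbs = 1

section BurnAux

open SimpleGraph

variable {n : ℕ}


lemma path_walk : ∀ (d : ℕ) (u v : Fin n), u.val + d = v.val →
    ∃ w : (pathGraph n).Walk u v, w.length = d := by
  intro d
  induction d with
  | zero =>
    intro u v h
    have : u = v := Fin.ext (by omega)
    subst this
    exact ⟨Walk.nil, rfl⟩
  | succ d ih =>
    intro u v h
    have hu1 : u.val + 1 < n := by omega
    have hadj : (pathGraph n).Adj u ⟨u.val + 1, hu1⟩ := pathGraph_adj.2 (Or.inl rfl)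
    obtain ⟨w, hw⟩ := ih ⟨u.val + 1, hu1⟩ v (by simp; omega)
    exact ⟨Walk.cons hadj w, by simp [hw]⟩

lemma path_reachable (u v : Fin n) : (pathGraph n).Reachable u v := by
  rcases le_or_gt u.val v.val with h | h
  · obtain ⟨w, _⟩ := path_walk (v.val - u.val) u v (by omega); exact ⟨w⟩
  · obtain ⟨w, _⟩ := path_walk (u.val - v.val) v u (by omega); exact Reachable.symm ⟨w⟩

lemma path_walk_ge {u v : Fin n} (w : (pathGraph n).Walk u v) :
    ((v.val : ℤ) - u.val).natAbs ≤ w.length := by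
  induction w with
  | nil => simp
  | @cons a b c h p ih =>
    rw [pathGraph_adj] at h
    simp only [Walk.length_cons]
    omega

lemma path_dist (u v : Fin n) : (pathGraph n).dist u v = ((v.val : ℤ) - u.val).natAbs := by
  have hr := path_reachable u v
  apply le_antisymm
  · rcases le_or_gt u.val v.val with h | h
    · obtain ⟨w, hw⟩ := path_walk (v.val - u.val) u v (by omega)
      calc (pathGraph n).dist u v ≤ w.length := dist_le w
        _ = _ := by omega
    · obtain ⟨w, hw⟩ := path_walk (u.val - v.val) v u (by omega)
      calc (pathGraph n).dist u v ≤ w.reverse.length := dist_le w.reverse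
        _ = _ := by simp [hw]; omega
  · obtain ⟨w, hw⟩ := hr.exists_walk_length_eq_dist
    have := path_walk_ge w
    omega

lemma mem_burnN_iff {s : ℕ → Fin n} {m j : ℕ} {w : Fin n} :
    w ∈ burnN (pathGraph n) s m j ↔ ∃ k, 1 ≤ k ∧ k ≤ m ∧ k + (pathGraph n).dist (s k) w ≤ j := by
  constructor
  · rintro ⟨k, h1, h2, h3, _, h5⟩; exact ⟨k, h1, h2, by omega⟩
  · rintro ⟨k, h1, h2, h3⟩; exact ⟨k, h1, h2, by omega, path_reachable _ _, by omega⟩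

lemma mem_burnU_iff {s : ℕ → Fin n} {m j : ℕ} {w : Fin n} :
    w ∈ burnU (pathGraph n) s m j ↔
      ∃ k, 1 ≤ k ∧ k ≤ m ∧ k + 1 ≤ j ∧ k + (pathGraph n).dist (s k) w ≤ j := by
  constructor
  · rintro ⟨k, h1, h2, h3, _, h5⟩; exact ⟨k, h1, h2, h3, by omega⟩
  · rintro ⟨k, h1, h2, h3, h4⟩; exact ⟨k, h1, h2, h3, path_reachable _ _, by omega⟩

lemma burnTime_le {s : ℕ → Fin n} {m k : ℕ} (w : Fin n) (hk1 : 1 ≤ k) (hkm : k ≤ m) :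
    burnTime (pathGraph n) s m w ≤ k + (pathGraph n).dist (s k) w :=
  Nat.sInf_le (mem_burnN_iff.2 ⟨k, hk1, hkm, le_refl _⟩)

lemma burnTime_spec {s : ℕ → Fin n} {m : ℕ} (hm : 1 ≤ m) (w : Fin n) :
    ∃ k, 1 ≤ k ∧ k ≤ m ∧ burnTime (pathGraph n) s m w = k + (pathGraph n).dist (s k) w := by
  have hne : {j | w ∈ burnN (pathGraph n) s m j}.Nonempty :=
    ⟨1 + (pathGraph n).dist (s 1) w, mem_burnN_iff.2 ⟨1, le_refl _, hm, le_refl _⟩⟩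
  have hmem : w ∈ burnN (pathGraph n) s m (burnTime (pathGraph n) s m w) := Nat.sInf_mem hne
  rw [mem_burnN_iff] at hmem
  obtain ⟨k, h1, h2, h3⟩ := hmem
  exact ⟨k, h1, h2, le_antisymm (burnTime_le w h1 h2) h3⟩

lemma burnTime_pos {s : ℕ → Fin n} {m : ℕ} (hm : 1 ≤ m) (w : Fin n) :
    1 ≤ burnTime (pathGraph n) s m w := by
  obtain ⟨k, h1, _, h3⟩ := burnTime_spec (s := s) hm w
  omega

lemma seq_dist {s : ℕ → Fin n} {m : ℕ} (hs : IsBurningSeq (pathGraph n) s m)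
    {k j : ℕ} (hk : 1 ≤ k) (hkj : k < j) (hj : j ≤ m) :
    j - k < (pathGraph n).dist (s k) (s j) := by
  by_contra h
  exact hs.2.1 j (by omega) hj (mem_burnU_iff.2 ⟨k, hk, by omega, by omega, by omega⟩)

lemma seq_cover {s : ℕ → Fin n} {m : ℕ} (hs : IsBurningSeq (pathGraph n) s m) (w : Fin n) :
    ∃ k, 1 ≤ k ∧ k ≤ m ∧ k + (pathGraph n).dist (s k) w ≤ m + 1 := by
  obtain ⟨k, h1, h2, _, h4⟩ := mem_burnU_iff.1 (hs.2.2 w)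
  exact ⟨k, h1, h2, h4⟩

lemma burnTime_source {s : ℕ → Fin n} {m : ℕ} (hs : IsBurningSeq (pathGraph n) s m)
    {k : ℕ} (hk1 : 1 ≤ k) (hkm : k ≤ m) : burnTime (pathGraph n) s m (s k) = k := by
  have hle : burnTime (pathGraph n) s m (s k) ≤ k := by
    have := burnTime_le (s := s) (s k) hk1 hkm
    simpa [SimpleGraph.dist_self] using this
  obtain ⟨i, h1, h2, h3⟩ := burnTime_spec (s := s) (hk1.trans hkm) (s k)
  rcases lt_trichotomy i k with h | h | h
  · have := seq_dist hs h1 h hkm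
    omega
  · subst h; simp [SimpleGraph.dist_self] at h3; omega
  · have := seq_dist hs hk1 h h2
    rw [SimpleGraph.dist_comm] at this
    omega

lemma hom_parity {s : ℕ → Fin n} {m : ℕ} (hh : IsBurningHom (pathGraph n) s m)
    (h0 : 0 < n) : ∀ (i : ℕ) (h : i < n),
      (burnTime (pathGraph n) s m ⟨i, h⟩ + i) % 2 = burnTime (pathGraph n) s m ⟨0, h0⟩ % 2 := by
  intro i
  induction i with
  | zero => intro h; rfl
  | succ i ih =>
    intro h
    have hadj : (pathGraph n).Adj ⟨i, by omega⟩ ⟨i + 1, h⟩ := pathGraph_adj.2 (Or.inl rfl)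
    have := hh.2 _ _ hadj
    have hi := ih (by omega)
    omega

lemma parity_source {s : ℕ → Fin n} {m : ℕ} (hh : IsBurningHom (pathGraph n) s m)
    (h0 : 0 < n) {k : ℕ} (hk1 : 1 ≤ k) (hkm : k ≤ m) :
    (k + (s k).val) % 2 = burnTime (pathGraph n) s m ⟨0, h0⟩ % 2 := by
  have h := hom_parity hh h0 (s k).val (s k).isLt
  have hsk : (⟨(s k).val, (s k).isLt⟩ : Fin n) = s k := by ext; rfl
  rw [hsk] at h
  rw [burnTime_source hh.1 hk1 hkm] at h
  exact h

lemma endTime_le {s : ℕ → Fin n} {m : ℕ} (hs : IsBurningSeq (pathGraph n) s m) :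
    endTime (pathGraph n) s m ≤ m + 1 := by
  apply Finset.sup_le
  intro w _
  obtain ⟨k, h1, h2, h3⟩ := seq_cover hs w
  have := burnTime_le (s := s) w h1 h2
  omega

lemma endTime_eq {s : ℕ → Fin n} {m : ℕ} (hh : IsBurningHom (pathGraph n) s m)
    (hn : 2 ≤ n) : endTime (pathGraph n) s m = m + 1 := by
  have hs := hh.1
  have hm : 1 ≤ m := hs.1
  -- neighbor of s m
  have h0 : 0 < n := by omega
  obtain ⟨w, hadj, hwv⟩ : ∃ w : Fin n, (pathGraph n).Adj (s m) w ∧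
      ((w.val : ℤ) - (s m).val).natAbs = 1 := by
    rcases lt_or_ge ((s m).val + 1) n with h | h
    · exact ⟨⟨(s m).val + 1, h⟩, pathGraph_adj.2 (Or.inl rfl), by simp⟩
    · have h1 : 1 ≤ (s m).val := by have := (s m).isLt; omega
      refine ⟨⟨(s m).val - 1, by omega⟩, pathGraph_adj.2 (Or.inr (by simp; omega)), ?_⟩
      simp; omega
  have hsm : burnTime (pathGraph n) s m (s m) = m := burnTime_source hs hm (le_refl m)
  have hhom := hh.2 _ _ hadj.symm
  rw [hsm] at hhom
  -- show burnTime w = m + 1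
  obtain ⟨k, h1, h2, h3⟩ := burnTime_spec (s := s) hm w
  have hbw : burnTime (pathGraph n) s m w = m + 1 := by
    rcases lt_or_ge k m with hkm | hkm
    · -- rule out value m - 1
      have hd := seq_dist hs h1 hkm (le_refl m)
      rw [path_dist] at hd h3
      have hdm : ((s m).val : ℤ) - (s k).val ≤ ((w.val : ℤ) - (s k).val).natAbs + 1 ∧
          ((s k).val : ℤ) - (s m).val ≤ ((w.val : ℤ) - (s k).val).natAbs + 1 := by omega
      omega
    · have : k = m := by omega
      subst this
      rw [path_dist] at h3
      omega
  have := Finset.le_sup (f := burnTime (pathGraph n) s m) (Finset.mem_univ w)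
  have h4 := endTime_le hs
  unfold endTime at *
  omega

lemma mk_hom (hn : 1 ≤ n) (s : ℕ → Fin n) (m : ℕ) (hm : 1 ≤ m)
    (H1 : ∀ k j, 1 ≤ k → k < j → j ≤ m → (j - k : ℕ) < (pathGraph n).dist (s k) (s j))
    (H2 : ∀ w : Fin n, ∃ k, 1 ≤ k ∧ k ≤ m ∧ k + (pathGraph n).dist (s k) w ≤ m + 1)
    (H3 : ∃ c, ∀ k, 1 ≤ k → k ≤ m → (k + (s k).val) % 2 = c) :
    IsBurningHom (pathGraph n) s m := by
  have hseq : IsBurningSeq (pathGraph n) s m := by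
    refine ⟨hm, ?_, ?_⟩
    · intro j h2 hj hmem
      obtain ⟨k, hk1, hkm, hkj, hkd⟩ := mem_burnU_iff.1 hmem
      have := H1 k j hk1 (by omega) hj
      omega
    · intro w
      obtain ⟨k, h1, h2, h3⟩ := H2 w
      exact mem_burnU_iff.2 ⟨k, h1, h2, by omega, h3⟩
  refine ⟨hseq, ?_⟩
  intro v w hadj
  obtain ⟨c, hc⟩ := H3
  obtain ⟨kv, hv1, hv2, hv3⟩ := burnTime_spec (s := s) hm v
  obtain ⟨kw, hw1, hw2, hw3⟩ := burnTime_spec (s := s) hm w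
  have hlv := burnTime_le (s := s) (m := m) v hw1 hw2
  have hlw := burnTime_le (s := s) (m := m) w hv1 hv2
  have hcv := hc kv hv1 hv2
  have hcw := hc kw hw1 hw2
  rw [pathGraph_adj] at hadj
  rw [path_dist] at hv3 hw3 hlv hlw
  omega

-- upper bound
lemma hom_upper {s : ℕ → Fin n} {m : ℕ} (hh : IsBurningHom (pathGraph n) s m)
    (hn : 2 ≤ n) : 3 * m ≤ n + 2 := by
  have h0 : 0 < n := by omega
  set c := burnTime (pathGraph n) s m ⟨0, h0⟩ % 2 with hc
  have hpair : ∀ k j, 1 ≤ k → k < j → j ≤ m →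
      3 ≤ (((s j).val : ℤ) - (s k).val).natAbs := by
    intro k j h1 h2 h3
    have hd := seq_dist hh.1 h1 h2 h3
    rw [path_dist] at hd
    have hp1 := parity_source hh h0 h1 (by omega)
    have hp2 := parity_source hh h0 (by omega : 1 ≤ j) h3
    omega
  have hinj : m ≤ (n + 2) / 3 := by
    have := Finset.card_le_card_of_injOn (f := fun k => (s k).val / 3)
      (s := Finset.Icc 1 m) (t := Finset.range ((n + 2) / 3))
      (by
        intro k hk
        simp only [Finset.mem_coe, Finset.mem_range]
        have := (s k).isLt
        omega)
      (by
        intro k hk j hj hf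
        have hf' : (s k).val / 3 = (s j).val / 3 := hf
        simp only [Finset.mem_coe, Finset.mem_Icc] at hk hj
        by_contra hne
        rcases lt_or_gt_of_ne hne with h | h
        · have := hpair k j hk.1 h hj.2; omega
        · have := hpair j k hj.1 h hk.2; omega)
    simpa using this
  omega

-- lower bound
lemma card_parity_ge (N t : ℕ) :
    N ≤ 2 * ((Finset.range N).filter (fun w => (w + t) % 2 = 0)).card + 1 := by
  have := Finset.card_le_card_of_injOn (f := fun j => 2 * j + t % 2)
    (s := Finset.range (N / 2))
    (t := (Finset.range N).filter (fun w => (w + t) % 2 = 0))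
    (by
      intro j hj
      simp only [Finset.mem_coe, Finset.mem_range] at hj
      simp only [Finset.mem_coe, Finset.mem_filter, Finset.mem_range]
      omega)
    (by intro a _ b _ h; have h' : 2 * a + t % 2 = 2 * b + t % 2 := h; omega)
  simp only [Finset.card_range] at this
  omega

lemma hom_lower {s : ℕ → Fin n} {m : ℕ} (hh : IsBurningHom (pathGraph n) s m)
    (hn : 2 ≤ n) : n ≤ m * m + m + 1 := by
  have h0 : 0 < n := by omega
  set c := burnTime (pathGraph n) s m ⟨0, h0⟩ % 2 with hc
  have hc2 : c < 2 := Nat.mod_lt _ (by omega)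
  -- strict cover for the right parity class
  have hcov : ∀ w : Fin n, (w.val + (c + m)) % 2 = 0 →
      ∃ k, 1 ≤ k ∧ k ≤ m ∧ k + (((w.val : ℤ)) - (s k).val).natAbs ≤ m := by
    intro w hw
    obtain ⟨k, h1, h2, h3⟩ := seq_cover hh.1 w
    rw [path_dist] at h3
    have hp := parity_source hh h0 h1 h2
    exact ⟨k, h1, h2, by omega⟩
  set A := (Finset.range n).filter (fun w => (w + (c + m)) % 2 = 0) with hA
  have hcard1 : n ≤ 2 * A.card + 1 := card_parity_ge n (c + m)
  -- A is covered by the balls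
  have hsub : A ⊆ (Finset.Icc 1 m).biUnion (fun k =>
      A.filter (fun w : ℕ => k + (((w : ℕ) : ℤ) - ((s k).val : ℤ)).natAbs ≤ m)) := by
    intro w hw
    simp only [hA, Finset.mem_filter, Finset.mem_range] at hw
    obtain ⟨k, h1, h2, h3⟩ := hcov ⟨w, hw.1⟩ (by simpa using hw.2)
    have h3' : k + (((w : ℕ) : ℤ) - ((s k).val : ℤ)).natAbs ≤ m := h3
    simp only [Finset.mem_biUnion, Finset.mem_Icc, Finset.mem_filter, hA, Finset.mem_range]
    exact ⟨k, ⟨h1, h2⟩, ⟨hw.1, hw.2⟩, h3'⟩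
  have hball : ∀ k, 1 ≤ k → k ≤ m →
      (A.filter (fun w : ℕ => k + (((w : ℕ) : ℤ) - ((s k).val : ℤ)).natAbs ≤ m)).card ≤ m + 1 - k := by
    intro k h1 h2
    have hp := parity_source hh h0 h1 h2
    have := Finset.card_le_card_of_injOn
      (f := fun w : ℕ => (w + (m - k) - (s k).val) / 2)
      (s := A.filter (fun w : ℕ => k + (((w : ℕ) : ℤ) - ((s k).val : ℤ)).natAbs ≤ m))
      (t := Finset.range (m + 1 - k))
      (by
        intro w hw
        simp only [Finset.mem_coe, hA, Finset.mem_filter, Finset.mem_range] at hw ⊢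
        omega)
      (by
        intro a ha b hb hf
        have hf' : (a + (m - k) - (s k).val) / 2 = (b + (m - k) - (s k).val) / 2 := hf
        simp only [Finset.mem_coe, hA, Finset.mem_filter, Finset.mem_range] at ha hb
        omega)
    simpa using this
  have hcard2 : A.card ≤ ∑ k ∈ Finset.Icc 1 m, (m + 1 - k) := by
    calc A.card ≤ ((Finset.Icc 1 m).biUnion (fun k =>
        A.filter (fun w : ℕ => k + (((w : ℕ) : ℤ) - ((s k).val : ℤ)).natAbs ≤ m))).card :=
          Finset.card_le_card hsub
      _ ≤ ∑ k ∈ Finset.Icc 1 m,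
          (A.filter (fun w : ℕ => k + (((w : ℕ) : ℤ) - ((s k).val : ℤ)).natAbs ≤ m)).card :=
          Finset.card_biUnion_le
      _ ≤ ∑ k ∈ Finset.Icc 1 m, (m + 1 - k) := by
          apply Finset.sum_le_sum
          intro k hk
          simp only [Finset.mem_Icc] at hk
          exact hball k hk.1 hk.2
  have hsum : 2 * (∑ k ∈ Finset.Icc 1 m, (m + 1 - k)) = m * m + m := by
    have h1 : ∑ k ∈ Finset.Icc 1 m, (m + 1 - k) = ∑ i ∈ Finset.range m, (m - i) := by
      rw [show Finset.Icc 1 m = Finset.Ico 1 (m + 1) by rfl, Finset.sum_Ico_eq_sum_range]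
      simp only [Nat.add_sub_cancel]
      exact Finset.sum_congr rfl fun x _ => by omega
    have h2 : ∑ i ∈ Finset.range m, (m - i) = ∑ i ∈ Finset.range m, (i + 1) := by
      have := Finset.sum_range_reflect (fun i => i + 1) m
      rw [← this]
      apply Finset.sum_congr rfl
      intro i hi
      simp only [Finset.mem_range] at hi
      omega
    have h3 : (∑ i ∈ Finset.range m, i) * 2 = m * (m - 1) := Finset.sum_range_id_mul_two m
    have h4 : m * (m - 1) + 2 * m = m * m + m := by
      cases m with
      | zero => simp
      | succ m' =>
        simp only [Nat.succ_sub_one]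
        ring
    rw [h1, h2, Finset.sum_add_distrib]
    simp only [Finset.sum_const, Finset.card_range, smul_eq_mul]
    omega
  omega


lemma ceil_third (n : ℕ) : (⌈(n : ℝ) / 3⌉ : ℤ) = (((n + 2) / 3 : ℕ) : ℤ) := by
  set q := (n + 2) / 3 with hq
  have h1 : n ≤ 3 * q := by omega
  have h2 : 3 * q < n + 3 := by omega
  rw [Int.ceil_eq_iff]
  constructor
  · rw [lt_div_iff₀ (by norm_num : (0:ℝ) < 3)]
    have : ((3 * q : ℕ) : ℝ) < ((n + 3 : ℕ) : ℝ) := by exact_mod_cast h2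
    push_cast at this ⊢
    linarith
  · rw [div_le_iff₀ (by norm_num : (0:ℝ) < 3)]
    have : ((n : ℕ) : ℝ) ≤ ((3 * q : ℕ) : ℝ) := by exact_mod_cast h1
    push_cast at this ⊢
    linarith

lemma ceil_sqrt_le {n m : ℕ} (hn : 2 ≤ n) (h : n ≤ m * m + m + 1) :
    ⌈(Real.sqrt (4 * n - 3) - 1) / 2⌉ ≤ (m : ℤ) := by
  rw [Int.ceil_le]
  rw [div_le_iff₀ (by norm_num : (0:ℝ) < 2)]
  have hs : Real.sqrt (4 * n - 3) ≤ 2 * m + 1 := by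
    have h1 : (4 * (n:ℝ) - 3) ≤ ((2 * m + 1) : ℝ) ^ 2 := by
      have : (n : ℝ) ≤ ((m * m + m + 1 : ℕ) : ℝ) := by exact_mod_cast h
      push_cast at this
      nlinarith
    calc Real.sqrt (4 * n - 3) ≤ Real.sqrt (((2 * m + 1) : ℝ) ^ 2) := Real.sqrt_le_sqrt h1
      _ = 2 * m + 1 := by
        rw [Real.sqrt_sq (by positivity)]
  push_cast
  linarith

lemma le_ceil_sqrt {n m : ℕ} (hm : 1 ≤ m) (h : m * m + 1 < n + m) :
    (m : ℤ) ≤ ⌈(Real.sqrt (4 * n - 3) - 1) / 2⌉ := by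
  have : ((m : ℤ) - 1) < ⌈(Real.sqrt (4 * n - 3) - 1) / 2⌉ := by
    rw [Int.lt_ceil]
    rw [lt_div_iff₀ (by norm_num : (0:ℝ) < 2)]
    have hs : (2 * (m:ℝ) - 1) < Real.sqrt (4 * n - 3) := by
      have h0 : (0:ℝ) ≤ 4 * (n:ℝ) - 3 := by
        have hn1 : 1 ≤ n := by nlinarith
        have : (1:ℝ) ≤ n := by exact_mod_cast hn1
        linarith
      have h1 : (2 * (m:ℝ) - 1) ^ 2 < 4 * (n:ℝ) - 3 := by
        have : ((m * m + 1 : ℕ) : ℝ) + 1 ≤ ((n + m : ℕ) : ℝ) := by exact_mod_cast h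
        push_cast at this
        nlinarith
      nlinarith [Real.sq_sqrt h0, Real.sqrt_nonneg (4 * (n:ℝ) - 3)]
    push_cast
    linarith
  omega

lemma sq_mod2 (a : ℕ) : a * a % 2 = a % 2 := by
  rcases Nat.even_or_odd a with ⟨t, ht⟩ | ⟨t, ht⟩
  · subst ht
    have he : (t + t) * (t + t) = 2 * (2 * (t * t)) := by ring
    omega
  · subst ht
    have he : (2 * t + 1) * (2 * t + 1) = 2 * (2 * (t * t) + 2 * t) + 1 := by ring
    omega

lemma pred_sq {m : ℕ} (hm : 1 ≤ m) : (m - 1) * (m - 1) + 2 * m = m * m + 1 := by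
  obtain ⟨m', rfl⟩ : ∃ m', m = m' + 1 := ⟨m - 1, by omega⟩
  have : (m' + 1 - 1) = m' := by omega
  rw [this]
  ring

set_option maxHeartbeats 1000000 in
lemma construct_lower_big {m : ℕ} (hn : 2 ≤ n) (hm : 3 ≤ m)
    (hup : n ≤ m * m + m + 1) (hlo : m * m + 1 < n + m) :
    ∃ s : ℕ → Fin n, IsBurningHom (pathGraph n) s m := by
  have hps := pred_sq (by omega : 1 ≤ m)
  -- x: right end position with correct parity
  set x := n - 1 - ((n - 1 + m) % 2) with hxdef
  set p : ℕ → ℕ := fun k => if k = 1 then min (m * m) x else (m + 1 - k) * (m + 1 - k)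
    with hpdef
  -- bounds on p for k ∈ [2, m]
  have hpk : ∀ k, 2 ≤ k → k ≤ m → p k = (m + 1 - k) * (m + 1 - k) ∧ p k ≤ n - 2 := by
    intro k h2 hkm
    have he : p k = (m + 1 - k) * (m + 1 - k) := by simp [hpdef]; omega
    have hA : m + 1 - k ≤ m - 1 := by omega
    have := Nat.mul_le_mul hA hA
    exact ⟨he, by omega⟩
  have hp1 : m * m - m ≤ p 1 ∧ p 1 ≤ m * m ∧ p 1 ≤ n - 1 := by
    have : p 1 = min (m * m) x := by simp [hpdef]
    omega
  set s : ℕ → Fin n := fun k => ⟨min (p k) (n - 1), by omega⟩ with hsdef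
  have hp1e : p 1 = min (m * m) x := by simp [hpdef]
  have hval : ∀ k, 1 ≤ k → k ≤ m → (s k).val = p k := by
    intro k h1 h2
    have hle : p k ≤ n - 1 := by
      rcases Nat.eq_or_lt_of_le h1 with h | h
      · rw [← h]; omega
      · have := hpk k (by omega) h2; omega
    simp only [hsdef]; omega
  refine ⟨s, mk_hom (by omega) s m (by omega) ?_ ?_ ?_⟩
  · -- distances
    intro k j h1 h2 h3
    rw [path_dist, hval k h1 (by omega), hval j (by omega) h3]
    rcases Nat.eq_or_lt_of_le h1 with h | h
    · -- k = 1
      subst h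
      obtain ⟨ej, _⟩ := hpk j (by omega) h3
      set A := m + 1 - j with hA
      have h6 : 1 ≤ A ∧ A ≤ m - 1 := ⟨by omega, by omega⟩
      have key : A * A + (m + 1 - A) + m ≤ m * m := by
        zify [show A ≤ m + 1 by omega]
        nlinarith [mul_nonneg (by omega : (0:ℤ) ≤ (m : ℤ) - 1 - A)
          (by omega : (0:ℤ) ≤ (A : ℤ) + (m : ℤ) - 2), h6.1, h6.2]
      omega
    · -- 2 ≤ k
      obtain ⟨ek, _⟩ := hpk k (by omega) (by omega)
      obtain ⟨ej, _⟩ := hpk j (by omega) h3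
      rw [ek, ej]
      set A := m + 1 - j with hA
      set d := j - k with hd
      have h5 : m + 1 - k = A + d := by omega
      have h6 : 1 ≤ A := by omega
      have h7 : 1 ≤ d := by omega
      rw [h5]
      have key : A * A + d + 1 ≤ (A + d) * (A + d) := by nlinarith
      omega
  · -- coverage
    intro w
    have hw := w.isLt
    set W := w.val with hW
    rcases le_or_gt W (m * m - m) with hcase | hcase
    · rcases Nat.eq_zero_or_pos W with h0 | h0
      · -- W = 0 : use k = m
        refine ⟨m, by omega, le_refl m, ?_⟩
        rw [path_dist, hval m (by omega) (le_refl m)]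
        obtain ⟨em, _⟩ := hpk m (by omega) (le_refl m)
        have : m + 1 - m = 1 := by omega
        rw [em, this]
        omega
      · -- 1 ≤ W ≤ m*m - m : use sqrt
        set r := Nat.sqrt W with hr
        have hr1 : r * r ≤ W := Nat.sqrt_le W
        have hr2 : W < (r + 1) * (r + 1) := Nat.lt_succ_sqrt W
        have hrpos : 1 ≤ r := by
          rcases Nat.eq_zero_or_pos r with h | h
          · rw [h] at hr2; omega
          · exact h
        have hsq1 : (r + 1) * (r + 1) = r * r + 2 * r + 1 := by ring
        rcases le_or_gt W (r * r + r) with hsub | hsub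
        · -- use r' = r, k = m + 1 - r
          have hrm : r ≤ m - 1 := by
            by_contra hcon
            have : m ≤ r := by omega
            have := Nat.mul_le_mul this this
            omega
          refine ⟨m + 1 - r, by omega, by omega, ?_⟩
          rw [path_dist, hval _ (by omega) (by omega)]
          obtain ⟨ek, _⟩ := hpk (m + 1 - r) (by omega) (by omega)
          have : m + 1 - (m + 1 - r) = r := by omega
          rw [ek, this]
          omega
        · -- use r' = r + 1, k = m - r
          have hrm : r + 1 ≤ m - 1 := by
            by_contra hcon
            have h8 : m - 1 ≤ r := by omega
            have := Nat.mul_le_mul h8 h8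
            omega
          refine ⟨m - r, by omega, by omega, ?_⟩
          rw [path_dist, hval _ (by omega) (by omega)]
          obtain ⟨ek, _⟩ := hpk (m - r) (by omega) (by omega)
          have : m + 1 - (m - r) = r + 1 := by omega
          rw [ek, this, hsq1]
          omega
    · -- big W : use k = 1
      refine ⟨1, le_refl 1, by omega, ?_⟩
      rw [path_dist, hval 1 (le_refl 1) (by omega)]
      omega
  · -- parity
    refine ⟨(1 + p 1) % 2, ?_⟩
    intro k h1 h2
    rw [hval k h1 h2]
    rcases Nat.eq_or_lt_of_le h1 with h | h
    · rw [← h]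
    · obtain ⟨ek, _⟩ := hpk k (by omega) h2
      have hs1 := sq_mod2 (m + 1 - k)
      have hsm := sq_mod2 m
      have hx2 : p 1 % 2 = m % 2 := by
        have : p 1 = min (m * m) x := by simp [hpdef]
        rcases le_total (m * m) x with hmin | hmin
        · omega
        · omega
      omega

lemma construct_lower_one (hn : 2 ≤ n) (hup : n ≤ 3) :
    ∃ s : ℕ → Fin n, IsBurningHom (pathGraph n) s 1 := by
  refine ⟨fun _ => ⟨(n - 1) / 2, by omega⟩, mk_hom (by omega) _ 1 le_rfl ?_ ?_ ?_⟩
  · intro k j h1 h2 h3; omega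
  · intro w
    have := w.isLt
    refine ⟨1, le_rfl, le_rfl, ?_⟩
    rw [path_dist]
    simp only
    omega
  · exact ⟨(1 + (n - 1) / 2) % 2, fun k h1 h2 => by
      have : k = 1 := by omega
      subst this; rfl⟩

lemma construct_lower_two (h4 : 4 ≤ n) (h7 : n ≤ 7) :
    ∃ s : ℕ → Fin n, IsBurningHom (pathGraph n) s 2 := by
  set p1 := (n + 2) / 2 with hp1
  set s : ℕ → Fin n := fun k => ⟨if k = 1 then p1 else p1 - 3, by split <;> omega⟩ with hs
  have e1 : (s 1).val = p1 := by simp [hs]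
  have e2 : (s 2).val = p1 - 3 := by simp [hs]
  refine ⟨s, mk_hom (by omega) s 2 (by omega) ?_ ?_ ?_⟩
  · intro k j h1 h2 h3
    have hk : k = 1 := by omega
    have hj : j = 2 := by omega
    subst hk; subst hj
    rw [path_dist, e1, e2]
    omega
  · intro w
    have hw := w.isLt
    rcases le_or_gt w.val (p1 - 2) with h | h
    · exact ⟨2, by omega, le_rfl, by rw [path_dist, e2]; omega⟩
    · exact ⟨1, by omega, by omega, by rw [path_dist, e1]; omega⟩
  · refine ⟨(1 + p1) % 2, fun k h1 h2 => ?_⟩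
    interval_cases k
    · rw [e1]
    · rw [e2]; omega

lemma construct_upper (hn : 2 ≤ n) :
    ∃ s : ℕ → Fin n, IsBurningHom (pathGraph n) s ((n + 2) / 3) := by
  set m := (n + 2) / 3 with hmdef
  have hm : 1 ≤ m := by omega
  set a := if n % 3 = 0 then 1 else 0 with hadef
  have ha : (n % 3 = 0 ∧ a = 1) ∨ (n % 3 ≠ 0 ∧ a = 0) := by
    by_cases h : n % 3 = 0 <;> simp [hadef, h]
  set s : ℕ → Fin n := fun k => ⟨min (3 * (k - 1) + a) (n - 1), by omega⟩ with hsdef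
  have hval : ∀ k, 1 ≤ k → k ≤ m → (s k).val = 3 * (k - 1) + a := by
    intro k h1 h2
    simp only [hsdef]
    omega
  refine ⟨s, mk_hom (by omega) s m hm ?_ ?_ ?_⟩
  · intro k j h1 h2 h3
    rw [path_dist]
    have e1 := hval k h1 (by omega)
    have e2 := hval j (by omega) h3
    omega
  · intro w
    have hw := w.isLt
    refine ⟨w.val / 3 + 1, by omega, by omega, ?_⟩
    rw [path_dist, hval _ (by omega) (by omega)]
    omega
  · exact ⟨(1 + a) % 2, fun k h1 h2 => by rw [hval k h1 h2]; omega⟩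

end BurnAux

/-- Corollary: for a burning homomorphism of `P_n` (`n ≥ 2`) with end time `T`,
`⌈(√(4n-3) - 1)/2⌉ + 1 ≤ T ≤ ⌈n/3⌉ + 1`, and both bounds are attained. -/
theorem stmt16 (n : ℕ) (hn : 2 ≤ n) :
    (∀ (s : ℕ → Fin n) (k : ℕ), IsBurningHom (SimpleGraph.pathGraph n) s k →
      ⌈(Real.sqrt (4 * n - 3) - 1) / 2⌉ + 1 ≤ (endTime (SimpleGraph.pathGraph n) s k : ℤ) ∧
        (endTime (SimpleGraph.pathGraph n) s k : ℤ) ≤ ⌈(n : ℝ) / 3⌉ + 1) ∧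
    (∃ (s : ℕ → Fin n) (k : ℕ), IsBurningHom (SimpleGraph.pathGraph n) s k ∧
      (endTime (SimpleGraph.pathGraph n) s k : ℤ) = ⌈(Real.sqrt (4 * n - 3) - 1) / 2⌉ + 1) ∧
    (∃ (s : ℕ → Fin n) (k : ℕ), IsBurningHom (SimpleGraph.pathGraph n) s k ∧
      (endTime (SimpleGraph.pathGraph n) s k : ℤ) = ⌈(n : ℝ) / 3⌉ + 1) := by
  have h0 : 0 < n := by omega
  refine ⟨?_, ?_, ?_⟩
  · intro s k hh
    have hT := endTime_eq hh hn
    have hlow := hom_lower hh hn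
    have hupp := hom_upper hh hn
    have hm1 : 1 ≤ k := hh.1.1
    constructor
    · have h1 := ceil_sqrt_le hn hlow
      rw [hT]; push_cast; omega
    · have h2 := ceil_third n
      rw [hT]; push_cast; omega
  · -- lower bound attained
    have haux : n ≤ n * n + n := Nat.le_add_left n (n * n)
    have hex : ∃ m, n ≤ m * m + m + 1 := ⟨n, by omega⟩
    set m := Nat.find hex with hm
    have hPm : n ≤ m * m + m + 1 := Nat.find_spec hex
    have hm1 : 1 ≤ m := by
      by_contra hc
      have hz : m = 0 := by omega
      rw [hz] at hPm
      norm_num at hPm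
      omega
    have hlo : m * m + 1 < n + m := by
      have hmin := Nat.find_min hex (show m - 1 < m by omega)
      have hps := pred_sq hm1
      omega
    obtain ⟨s, hs⟩ : ∃ s : ℕ → Fin n, IsBurningHom (SimpleGraph.pathGraph n) s m := by
      rcases lt_or_ge m 3 with h3 | h3
      · interval_cases m
        · exact construct_lower_one hn (by norm_num at hPm; omega)
        · exact construct_lower_two (by norm_num at hlo; omega) (by norm_num at hPm; omega)
      · exact construct_lower_big hn h3 hPm hlo
    refine ⟨s, m, hs, ?_⟩
    rw [endTime_eq hs hn]
    have h1 := ceil_sqrt_le hn hPm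
    have h2 := le_ceil_sqrt hm1 hlo
    push_cast
    omega
  · -- upper bound attained
    obtain ⟨s, hs⟩ := construct_upper hn
    refine ⟨s, (n + 2) / 3, hs, ?_⟩
    rw [endTime_eq hs hn, ceil_third n]
    push_cast
    omega
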